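/- There is no positive (10,6)-reverse multiple; that is, there is no positive integer M such that the reversal of the decimal digit expansion of M equals the decimal digit expansion of 6·M. -/

import Mathlib

/-- There is no positive `(10, 6)`-reverse multiple. -/
theorem stmt_9 :
    ¬ ∃ M : ℕ, 0 < M ∧ (Nat.digits 10 M).reverse = Nat.digits 10 (6 * M) := by
  rintro ⟨M, hM, h⟩
  set L := Nat.digits 10 M with hL
  have hMne : M ≠ 0 := hM.ne'
  have hLne : L ≠ [] := Nat.digits_ne_nil_iff_ne_zero.mpr hMne
  set n := L.length with hn
  -- last digit d
  set d := L.getLast hLne with hd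
  have hdne : d ≠ 0 := Nat.getLast_digit_ne_zero 10 hMne
  -- M ≥ d * 10^(n-1)
  have hsplit : L = L.dropLast ++ [d] := (List.dropLast_append_getLast hLne).symm
  have hMval : M = Nat.ofDigits 10 L := (Nat.ofDigits_digits 10 M).symm
  have hge : d * 10 ^ (n - 1) ≤ M := by
    rw [hMval, hsplit, Nat.ofDigits_append]
    have hlen : L.dropLast.length = n - 1 := by simp [hn]
    rw [hlen]
    have : (Nat.ofDigits 10 [d] : ℕ) = d := by simp [Nat.ofDigits]
    push_cast [this]
    nlinarith [Nat.zero_le (Nat.ofDigits 10 L.dropLast)]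
  -- 6M % 10 = d via reversal
  have h6Mne : 6 * M ≠ 0 := by positivity
  have hhead : (Nat.digits 10 (6 * M)).head? = some ((6 * M) % 10) := by
    rw [Nat.digits_def' (by norm_num : 1 < 10) (by positivity)]
    simp
  have hhead2 : (L.reverse).head? = some d := by
    rw [List.head?_reverse]
    exact List.getLast?_eq_getLast hLne ▸ rfl
  have hdd : (6 * M) % 10 = d := by
    rw [h] at hhead2
    rw [hhead] at hhead2
    exact Option.some_inj.mp hhead2
  -- d is even
  have heven : d % 2 = 0 := by omega
  have hd2 : 2 ≤ d := by omega
  have hlt : 6 * M < 10 ^ n := by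
    have := Nat.lt_base_pow_length_digits (b := 10) (m := 6 * M) (by norm_num)
    rwa [← h, List.length_reverse] at this
  have hn1 : 1 ≤ n := by
    rw [hn]
    exact List.length_pos_iff.mpr hLne
  have h10 : 10 ^ n = 10 * 10 ^ (n - 1) := by
    rw [← pow_succ']
    congr 1
    omega
  have hp : 0 < 10 ^ (n - 1) := Nat.pow_pos (by norm_num)
  nlinarith
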